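/- arXiv:2512.22638 — 2 statements merged into one kernel-verified Lean document; each statement's English description precedes it below -/
import Mathlib

section
/- Let Θ be a measurable space and π₀, π₁ two measures on Θ (priors for two hypotheses). Let L, L̃ : Θ → ℝ be measurable with |L(θ) − L̃(θ)| ≤ η for all θ ∈ Θ, η ≥ 0. Assume exp∘L and exp∘L̃ are integrable with respect to both π₀ and π₁, and that all four marginal likelihoods ∫ exp(L) dπᵢ and ∫ exp(L̃) dπᵢ (i = 0, 1) are strictly positive. Then the log-Bayes factors satisfy |log(∫ exp(L̃) dπ₁ / ∫ exp(L̃) dπ₀) − log(∫ exp(L) dπ₁ / ∫ exp(L) dπ₀)| ≤ 2·η. In particular, if η = n·ε where n is the sample size and ε the pointwise approximation error, the log-Bayes-factor error is at most 2·n·ε. -/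
open MeasureTheory


lemma log_int_exp_close {Θ : Type*} [MeasurableSpace Θ] (π : Measure Θ)
    (L Lt : Θ → ℝ) (η : ℝ)
    (happrox : ∀ θ : Θ, |L θ - Lt θ| ≤ η)
    (hint : Integrable (fun θ => Real.exp (L θ)) π)
    (hint' : Integrable (fun θ => Real.exp (Lt θ)) π)
    (hpos : 0 < ∫ θ, Real.exp (L θ) ∂π)
    (hpos' : 0 < ∫ θ, Real.exp (Lt θ) ∂π) :
    |Real.log (∫ θ, Real.exp (Lt θ) ∂π) - Real.log (∫ θ, Real.exp (L θ) ∂π)| ≤ η := by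
  rw [abs_le]
  have h1 : (∫ θ, Real.exp (Lt θ) ∂π) ≤ Real.exp η * ∫ θ, Real.exp (L θ) ∂π := by
    rw [← integral_const_mul]
    apply integral_mono hint' (hint.const_mul _)
    intro θ
    simp only []
    show Real.exp _ ≤ Real.exp η * Real.exp _
    rw [← Real.exp_add]
    apply Real.exp_le_exp.2
    have := (abs_le.1 (happrox θ)).1
    linarith
  have h2 : (∫ θ, Real.exp (L θ) ∂π) ≤ Real.exp η * ∫ θ, Real.exp (Lt θ) ∂π := by
    rw [← integral_const_mul]
    apply integral_mono hint (hint'.const_mul _)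
    intro θ
    simp only []
    show Real.exp _ ≤ Real.exp η * Real.exp _
    rw [← Real.exp_add]
    apply Real.exp_le_exp.2
    have := (abs_le.1 (happrox θ)).2
    linarith
  constructor
  · have := Real.log_le_log hpos h2
    rw [Real.log_mul (Real.exp_ne_zero _) (ne_of_gt hpos'), Real.log_exp] at this
    linarith
  · have := Real.log_le_log hpos' h1
    rw [Real.log_mul (Real.exp_ne_zero _) (ne_of_gt hpos), Real.log_exp] at this
    linarith


/-- **Bayes factor preservation.** If `|L − L̃| ≤ η` pointwise and all four
marginal likelihoods (under priors `π₀`, `π₁`) are integrable and strictly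
positive, then the log-Bayes factors differ by at most `2·η`. -/
theorem bayes_factor_preservation {Θ : Type*} [MeasurableSpace Θ]
    (π₀ π₁ : Measure Θ)
    (L Lt : Θ → ℝ) (hL : Measurable L) (hLt : Measurable Lt)
    (η : ℝ) (hη : 0 ≤ η)
    (happrox : ∀ θ : Θ, |L θ - Lt θ| ≤ η)
    (hint0 : Integrable (fun θ => Real.exp (L θ)) π₀)
    (hint1 : Integrable (fun θ => Real.exp (L θ)) π₁)
    (hint0' : Integrable (fun θ => Real.exp (Lt θ)) π₀)
    (hint1' : Integrable (fun θ => Real.exp (Lt θ)) π₁)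
    (hpos0 : 0 < ∫ θ, Real.exp (L θ) ∂π₀)
    (hpos1 : 0 < ∫ θ, Real.exp (L θ) ∂π₁)
    (hpos0' : 0 < ∫ θ, Real.exp (Lt θ) ∂π₀)
    (hpos1' : 0 < ∫ θ, Real.exp (Lt θ) ∂π₁) :
    |Real.log ((∫ θ, Real.exp (Lt θ) ∂π₁) / (∫ θ, Real.exp (Lt θ) ∂π₀)) -
      Real.log ((∫ θ, Real.exp (L θ) ∂π₁) / (∫ θ, Real.exp (L θ) ∂π₀))| ≤
      2 * η := by
  rw [Real.log_div (ne_of_gt hpos1') (ne_of_gt hpos0'),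
      Real.log_div (ne_of_gt hpos1) (ne_of_gt hpos0)]
  have h1 := log_int_exp_close π₁ L Lt η happrox hint1 hint1' hpos1 hpos1'
  have h0 := log_int_exp_close π₀ L Lt η happrox hint0 hint0' hpos0 hpos0'
  rw [abs_le] at h0 h1 ⊢
  constructor <;> linarith
end

section
/- Let (X, 𝒜, μ) be a probability space, A, B ∈ 𝒜 disjoint with μ(A) > 0 and μ(B) > 0, and T : X → Z a map for which there exist x ∈ A and x' ∈ B with T(x) = T(x'). Then for every M > 0 there exist measurable functions p₁, p₂ : X → ℝ that are strictly positive, bounded, and satisfy ∫ p₁ dμ = ∫ p₂ dμ = 1 (namely p₁ = (1 + M·𝟙_A)/(1 + M·μ(A)) and p₂ = (1 + M·𝟙_B)/(1 + M·μ(B))), such that for every decoder λ̃ : Z → ℝ, sup_{y ∈ X} |log(p₁(y)/p₂(y)) − λ̃(T(y))| ≥ log(1 + M). Hence no non-injective embedding can achieve zero likelihood-ratio distortion uniformly over all dominated models. -/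
open MeasureTheory

/-- **No free lunch.** If an embedding `T` collides on two disjoint sets of
positive measure, then for every `M > 0` there exist two bounded, strictly
positive probability densities (bump perturbations of the uniform density on
`A` and `B` respectively) whose log-likelihood ratio cannot be reproduced from
the embedding by any decoder to accuracy better than `log(1 + M)`. -/
theorem no_free_lunch {X Z : Type*} [MeasurableSpace X]
    (μ : Measure X) [IsProbabilityMeasure μ]
    (A B : Set X) (hA : MeasurableSet A) (hB : MeasurableSet B)
    (hdisj : Disjoint A B) (hApos : 0 < μ A) (hBpos : 0 < μ B)
    (T : X → Z) (x x' : X) (hx : x ∈ A) (hx' : x' ∈ B) (hcol : T x = T x') :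
    ∀ M : ℝ, 0 < M →
      ∃ p₁ p₂ : X → ℝ,
        Measurable p₁ ∧ Measurable p₂ ∧
        (∀ y, 0 < p₁ y) ∧ (∀ y, 0 < p₂ y) ∧
        (∃ C : ℝ, ∀ y, p₁ y ≤ C) ∧ (∃ C : ℝ, ∀ y, p₂ y ≤ C) ∧
        (∫ y, p₁ y ∂μ) = 1 ∧ (∫ y, p₂ y ∂μ) = 1 ∧
        (p₁ = fun y => (1 + M * A.indicator 1 y) / (1 + M * (μ A).toReal)) ∧
        (p₂ = fun y => (1 + M * B.indicator 1 y) / (1 + M * (μ B).toReal)) ∧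
        ∀ lamTil : Z → ℝ, ∃ y : X,
          Real.log (1 + M) ≤ |Real.log (p₁ y / p₂ y) - lamTil (T y)| := by
  intro M hM
  set a : ℝ := (μ A).toReal with ha
  set b : ℝ := (μ B).toReal with hb
  have ha0 : 0 ≤ a := ENNReal.toReal_nonneg
  have hb0 : 0 ≤ b := ENNReal.toReal_nonneg
  have hα : (0:ℝ) < 1 + M * a := by positivity
  have hβ : (0:ℝ) < 1 + M * b := by positivity
  set p₁ : X → ℝ := fun y => (1 + M * A.indicator 1 y) / (1 + M * a) with hp1
  set p₂ : X → ℝ := fun y => (1 + M * B.indicator 1 y) / (1 + M * b) with hp2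
  have hindnn : ∀ (S : Set X) (y : X), (0:ℝ) ≤ S.indicator 1 y := by
    intro S y
    exact Set.indicator_nonneg (fun _ _ => zero_le_one) y
  have hindle : ∀ (S : Set X) (y : X), S.indicator (1 : X → ℝ) y ≤ 1 := by
    intro S y
    exact Set.indicator_le_self' (fun _ _ => zero_le_one) y
  have hint : ∀ (S : Set X), MeasurableSet S →
      ∫ y, (1 + M * S.indicator 1 y) ∂μ = 1 + M * (μ S).toReal := by
    intro S hS
    have h1 : Integrable (fun y => S.indicator (1 : X → ℝ) y) μ :=
      (integrable_const (1:ℝ)).indicator hS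
    rw [integral_add (integrable_const 1) (h1.const_mul M), integral_const,
      integral_const_mul]
    simp [integral_indicator_one hS, Measure.real_def]
  refine ⟨p₁, p₂, ?_, ?_, ?_, ?_, ⟨(1 + M) / (1 + M * a), ?_⟩,
    ⟨(1 + M) / (1 + M * b), ?_⟩, ?_, ?_, rfl, rfl, ?_⟩
  · exact ((measurable_const.add ((measurable_const.indicator hA).const_mul M)).div_const _)
  · exact ((measurable_const.add ((measurable_const.indicator hB).const_mul M)).div_const _)
  · intro y
    have := hindnn A y
    positivity
  · intro y
    have := hindnn B y
    positivity
  · intro y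
    exact (div_le_div_iff_of_pos_right hα).2 (by nlinarith [hindle A y])
  · intro y
    exact (div_le_div_iff_of_pos_right hβ).2 (by nlinarith [hindle B y])
  · rw [hp1]
    simp only [div_eq_mul_inv]
    rw [integral_mul_const, hint A hA]
    field_simp
    rfl
  · rw [hp2]
    simp only [div_eq_mul_inv]
    rw [integral_mul_const, hint B hB]
    field_simp
    rfl
  · intro lamTil
    have hxB : x ∉ B := Set.disjoint_left.1 hdisj hx
    have hx'A : x' ∉ A := Set.disjoint_right.1 hdisj hx'
    have hp1x : p₁ x = (1 + M) / (1 + M * a) := by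
      simp [hp1, Set.indicator_of_mem hx]
    have hp2x : p₂ x = 1 / (1 + M * b) := by
      simp [hp2, Set.indicator_of_notMem hxB]
    have hp1x' : p₁ x' = 1 / (1 + M * a) := by
      simp [hp1, Set.indicator_of_notMem hx'A]
    have hp2x' : p₂ x' = (1 + M) / (1 + M * b) := by
      simp [hp2, Set.indicator_of_mem hx']
    have hM1 : (0:ℝ) < 1 + M := by linarith
    have hrx : p₁ x / p₂ x = (1 + M) * ((1 + M * b) / (1 + M * a)) := by
      rw [hp1x, hp2x]; field_simp
    have hrx' : p₁ x' / p₂ x' = (1 + M * b) / (1 + M * a) / (1 + M) := by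
      rw [hp1x', hp2x']; field_simp; try ring
    have hq : (0:ℝ) < (1 + M * b) / (1 + M * a) := by positivity
    have hu : Real.log (p₁ x / p₂ x)
        = Real.log (1 + M) + Real.log ((1 + M * b) / (1 + M * a)) := by
      rw [hrx, Real.log_mul hM1.ne' hq.ne']
    have hv : Real.log (p₁ x' / p₂ x')
        = Real.log ((1 + M * b) / (1 + M * a)) - Real.log (1 + M) := by
      rw [hrx', Real.log_div hq.ne' hM1.ne']
    have hlog : 0 < Real.log (1 + M) := Real.log_pos (by linarith)
    by_contra h
    push_neg at h
    have h1 := h x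
    have h2 := h x'
    rw [hcol] at h1
    set c := lamTil (T x') with hc
    have hsum : |Real.log (p₁ x / p₂ x) - c| + |Real.log (p₁ x' / p₂ x') - c|
        < 2 * Real.log (1 + M) := by linarith
    have hdiff : Real.log (p₁ x / p₂ x) - Real.log (p₁ x' / p₂ x')
        = 2 * Real.log (1 + M) := by rw [hu, hv]; ring
    have := abs_sub_abs_le_abs_sub (Real.log (p₁ x / p₂ x) - c)
      (Real.log (p₁ x' / p₂ x') - c)
    have h3 : |Real.log (p₁ x / p₂ x) - Real.log (p₁ x' / p₂ x')|
        ≤ |Real.log (p₁ x / p₂ x) - c| + |Real.log (p₁ x' / p₂ x') - c| := by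
      calc |Real.log (p₁ x / p₂ x) - Real.log (p₁ x' / p₂ x')|
          = |(Real.log (p₁ x / p₂ x) - c) - (Real.log (p₁ x' / p₂ x') - c)| := by
            ring_nf
        _ ≤ _ := abs_sub _ _
    rw [hdiff] at h3
    rw [abs_of_pos (by linarith)] at h3
    linarith
end
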